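/- Let x ∈ {q,−1} and let (R^x_{u,w}) be the family of Kazhdan–Lusztig R^x-polynomials of a pircon system (P,S), and assume it satisfies the up-down symmetry. Then the map ι^x is an involution of 𝓜_P: ι^x(ι^x(m)) = m for every m ∈ 𝓜_P. -/

import Mathlib

open Polynomial LaurentPolynomial

noncomputable section

/-- A quasi special partial matching of a poset `P`: an involution `M : P → P` such that
for every `t`, either `M t ⋖ t`, `M t = t`, or `t ⋖ M t`, and whenever `t ⋖ u` and
`M t ≠ u`, then `M t < M u`. -/
def IsQSPM {P : Type*} [PartialOrder P] (M : P → P) : Prop :=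
  Function.Involutive M ∧
  (∀ t : P, M t ⋖ t ∨ M t = t ∨ t ⋖ M t) ∧
  ∀ t u : P, t ⋖ u → M t ≠ u → M t < M u

/-- A quasi special partial matching of the order ideal `P_{≤w}`. -/
def IsQSPMOn {P : Type*} [PartialOrder P] (w : P) (M : P → P) : Prop :=
  (∀ u : P, u ≤ w → M u ≤ w) ∧
  (∀ u : P, u ≤ w → M (M u) = u) ∧
  (∀ u : P, u ≤ w → M u ⋖ u ∨ M u = u ∨ u ⋖ M u) ∧
  ∀ u t : P, u ≤ w → t ≤ w → u ⋖ t → M u ≠ t → M u < M t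

/-- A special partial matching of the order ideal `P_{≤w}` (whose maximum is `w`). -/
def IsSPMOn {P : Type*} [PartialOrder P] (w : P) (M : P → P) : Prop :=
  IsQSPMOn w M ∧ M w ⋖ w

/-- A pircon: for every non-minimal `x`, the order ideal `P_{≤x}` is finite and admits
a special partial matching. -/
def IsPircon (P : Type*) [PartialOrder P] : Prop :=
  ∀ x : P, ¬ IsMin x → (Set.Iic x).Finite ∧ ∃ M : P → P, IsSPMOn x M

/-- A pircon system `(P,S)`: `S` is a set of quasi special partial matchings of `P` such
that every `w ≠ ⊥` is matched downwards by some `M ∈ S`. -/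
def IsPirconSystem {P : Type*} [PartialOrder P] [OrderBot P] (S : Set (P → P)) : Prop :=
  (∀ M ∈ S, IsQSPM M) ∧ ∀ w : P, w ≠ ⊥ → ∃ M ∈ S, M w ⋖ w

/-- The defining properties of the family of Kazhdan--Lusztig `R^x`-polynomials of a
pircon system `(P,S)`, where `x ∈ {q,-1} ⊆ ℤ[q]` (here `q` is the variable `X`). -/
def IsKLRFamily {P : Type*} [PartialOrder P] (S : Set (P → P)) (x : Polynomial ℤ)
    (R : P → P → Polynomial ℤ) : Prop :=
  (∀ u w : P, ¬ u ≤ w → R u w = 0) ∧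
  (∀ w : P, R w w = 1) ∧
  ∀ M ∈ S, ∀ u w : P, M w ⋖ w →
    (M u ⋖ u → R u w = R (M u) (M w)) ∧
    (u ⋖ M u → R u w = (X - 1) * R u (M w) + X * R (M u) (M w)) ∧
    (M u = u → R u w = (X - 1 - x) * R u (M w))

/-- The up-down symmetry for a family of Kazhdan--Lusztig `R^x`-polynomials. -/
def UpDownSymmetry {P : Type*} [PartialOrder P] (S : Set (P → P)) (x : Polynomial ℤ)
    (R : P → P → Polynomial ℤ) : Prop :=
  ∀ M ∈ S, ∀ u w : P, u ⋖ M u →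
    (w ⋖ M w → R u w = R (M u) (M w)) ∧
    (M w ⋖ w → R u w = (X - 1) * R (M u) w + X * R (M u) (M w)) ∧
    (M w = w → R u w = (X - 1 - x) * R (M u) w)

/-!  The ring `A = ℤ[q^{1/2}, q^{-1/2}]` is realized as `LaurentPolynomial ℤ`, with
`q^{1/2} = T 1` and hence `q = T 2`; the bar involution `q^{1/2} ↦ q^{-1/2}` is
`LaurentPolynomial.invert`.  The free `A`-module `𝓜_P = ⊕_{u ∈ P} A·m_u` is realized as
the finitely supported elements of `P → A`, the basis element `m_u` corresponding to the
indicator of `u`. -/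

/-- Evaluation of a polynomial in `q` at `q = T 2`, i.e. the inclusion
`ℤ[q] → ℤ[q^{1/2}, q^{-1/2}]`. -/
def evq (p : Polynomial ℤ) : LaurentPolynomial ℤ :=
  Polynomial.aeval (T 2 : LaurentPolynomial ℤ) p

open Classical in
/-- The `y`-action of the operator `T_M` on `𝓜_P`, written in coordinates:
`T_M(m_v) = m_{M v}` if `v ⋖ M v`; `T_M(m_v) = q·m_{M v} + (q-1)·m_v` if `M v ⋖ v`;
and `T_M(m_v) = y·m_v` if `M v = v`. -/
def TMact {P : Type*} [PartialOrder P] (M : P → P) (y : LaurentPolynomial ℤ)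
    (f : P → LaurentPolynomial ℤ) : P → LaurentPolynomial ℤ := fun u =>
  if M u = u then y * f u
  else if M u < u then f (M u) + (T 2 - 1) * f u
  else T 2 * f (M u)

/-- The map `ι^x` on `𝓜_P`, written in coordinates:
`ι^x(Σ_v f_v·m_v) = Σ_v f̄_v·q^{-ρ(v)}·Σ_{u} (-1)^{ρ(u,v)}·R^x_{u,v}(q)·m_u`. -/
def iotaAct {P : Type*} [PartialOrder P] (ρ : P → ℕ) (R : P → P → Polynomial ℤ)
    (f : P → LaurentPolynomial ℤ) : P → LaurentPolynomial ℤ := fun u =>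
  ∑ᶠ v : P, invert (f v) * (T (-2 * (ρ v : ℤ)) * ((-1) ^ (ρ v - ρ u) * evq (R u v)))

/-- The involution `j_P` of `𝓜_P`: `j_P(a·m_w) = ā·(-q^{-1})^{ρ(w)}·m_w`. -/
def jPact {P : Type*} [PartialOrder P] (ρ : P → ℕ) (f : P → LaurentPolynomial ℤ) :
    P → LaurentPolynomial ℤ := fun w => invert (f w) * (-T (-2)) ^ (ρ w)

/-- `deg f < k/2`. -/
def DegLtHalf (f : Polynomial ℤ) (k : ℤ) : Prop :=
  f = 0 ∨ 2 * (f.natDegree : ℤ) < k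

/-- The Kazhdan--Lusztig--Stanley polynomials of the kernel `(R_{u,w})`: `P_{u,w} = 0`
unless `u ≤ w`, `P_{w,w} = 1`, `deg P_{u,w} < ρ(u,w)/2` for `u < w`, and
`q^{ρ(u,w)}·P_{u,w}(q⁻¹) = Σ_{u ≤ t ≤ w} R_{u,t}(q)·P_{t,w}(q)`. -/
def IsKLSFamily {P : Type*} [PartialOrder P] (ρ : P → ℕ)
    (R Pp : P → P → Polynomial ℤ) : Prop :=
  (∀ u w : P, ¬ u ≤ w → Pp u w = 0) ∧
  (∀ w : P, Pp w w = 1) ∧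
  (∀ u w : P, u < w → DegLtHalf (Pp u w) ((ρ w : ℤ) - (ρ u : ℤ))) ∧
  ∀ u w : P, u ≤ w →
    T (2 * ((ρ w : ℤ) - (ρ u : ℤ))) * invert (evq (Pp u w)) =
      ∑ᶠ t ∈ Set.Icc u w, evq (R u t) * evq (Pp t w)

/-- The Kazhdan--Lusztig element `C^x_w ∈ 𝓜_P`, in coordinates: its coefficient on `m_v`
is `q^{ρ(w)/2}·(-1)^{ρ(v,w)}·q^{-ρ(v)}·P^x_{v,w}(q^{-1})`. -/
def Cel {P : Type*} [PartialOrder P] (ρ : P → ℕ) (Pp : P → P → Polynomial ℤ) (w : P) :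
    P → LaurentPolynomial ℤ := fun v =>
  T (ρ w : ℤ) * ((-1) ^ (ρ w - ρ v) * (T (-2 * (ρ v : ℤ)) * invert (evq (Pp v w))))

/-- The Kazhdan--Lusztig element `C'^x_w ∈ 𝓜_P`, in coordinates: its coefficient on
`m_v` is `q^{-ρ(w)/2}·P^z_{v,w}(q)` (the family `Pp` fed here is `P^z`). -/
def Cel' {P : Type*} [PartialOrder P] (ρ : P → ℕ) (Pp : P → P → Polynomial ℤ) (w : P) :
    P → LaurentPolynomial ℤ := fun v =>
  T (-(ρ w : ℤ)) * evq (Pp v w)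

section KLAux

open Function

set_option linter.unusedSectionVars false

variable {P : Type*} [PartialOrder P] [OrderBot P]

private lemma hTT : (T 2 : LaurentPolynomial ℤ) * T (-2) = 1 := by
  rw [← T_add]; norm_num

private lemma evq_zero : evq (0 : Polynomial ℤ) = 0 := by simp [evq]

private lemma evq_one : evq (1 : Polynomial ℤ) = 1 := by simp [evq]

private lemma sgn_split {A' : Type*} [CommRing A'] (a b : ℕ) (p : A') (h : p = 0 ∨ a ≤ b) :
    (-1 : A') ^ (b - a) * p = (-1) ^ b * ((-1) ^ a * p) := by
  rcases h with h | h
  · simp [h]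
  · have hb : (-1 : A') ^ b = (-1) ^ (b - a) * (-1) ^ a := by
      rw [← pow_add, Nat.sub_add_cancel h]
    have h2 : ((-1 : A') ^ a) * ((-1 : A') ^ a) = 1 := by
      rw [← pow_add, ← two_mul, pow_mul]; norm_num
    rw [hb]
    linear_combination (-((-1 : A') ^ (b - a)) * p) * h2

private lemma iic_finite (hP : IsPircon P) (v : P) : (Set.Iic v).Finite := by
  by_cases h : IsMin v
  · exact (Set.finite_singleton v).subset fun u hu => le_antisymm hu (h hu)
  · exact (hP v h).1

private lemma rho_lt (hP : IsPircon P) {ρ : P → ℕ}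
    (hρcov : ∀ a b : P, a ⋖ b → ρ b = ρ a + 1) :
    ∀ u v : P, u < v → ρ u < ρ v := by
  have key : ∀ n : ℕ, ∀ u v : P, u < v → (Set.Icc u v).ncard ≤ n → ρ u < ρ v := by
    intro n
    induction n with
    | zero =>
      intro u v huv hc
      have hfin : (Set.Icc u v).Finite := (iic_finite hP v).subset Set.Icc_subset_Iic_self
      have : 0 < (Set.Icc u v).ncard :=
        (Set.ncard_pos hfin).mpr ⟨u, le_refl u, huv.le⟩
      omega
    | succ n ih =>
      intro u v huv hc
      have hfin : (Set.Icc u v).Finite := (iic_finite hP v).subset Set.Icc_subset_Iic_self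
      set s : Set P := {c | u < c ∧ c ≤ v} with hs
      have hsfin : s.Finite := (iic_finite hP v).subset fun c hc => hc.2
      obtain ⟨c, hcs, hcmin⟩ : ∃ c ∈ s, ∀ z ∈ s, id z ≤ id c → id c = id z := by
        obtain ⟨c, hcs, hc⟩ := Set.Finite.exists_minimalFor id s hsfin ⟨v, huv, le_refl v⟩
        exact ⟨c, hcs, fun z hz hzc => le_antisymm (hc hz hzc) hzc⟩
      have hcov : u ⋖ c := by
        refine ⟨hcs.1, fun z hz hzc => ?_⟩
        have hzs : z ∈ s := ⟨hz, hzc.le.trans hcs.2⟩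
        have := hcmin z hzs hzc.le
        exact absurd this.symm hzc.ne
      have hρc : ρ c = ρ u + 1 := hρcov u c hcov
      rcases eq_or_lt_of_le hcs.2 with rfl | hcv
      · omega
      · have hsub : Set.Icc c v ⊂ Set.Icc u v := by
          constructor
          · intro z hz
            exact ⟨(hcs.1.le).trans hz.1, hz.2⟩
          · intro hsub'
            have : u ∈ Set.Icc c v := hsub' ⟨le_refl u, huv.le⟩
            exact absurd this.1 hcs.1.not_ge
        have hlt : (Set.Icc c v).ncard < (Set.Icc u v).ncard := Set.ncard_lt_ncard hsub hfin
        have := ih c v hcv (by omega)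
        omega
  intro u v huv
  exact key _ u v huv le_rfl

private lemma rho_le (hP : IsPircon P) {ρ : P → ℕ}
    (hρcov : ∀ a b : P, a ⋖ b → ρ b = ρ a + 1) {u v : P} (h : u ≤ v) : ρ u ≤ ρ v := by
  rcases eq_or_lt_of_le h with rfl | h
  · exact le_rfl
  · exact (rho_lt hP hρcov u v h).le

private def KK (ρ : P → ℕ) (R : P → P → Polynomial ℤ) (u v : P) : LaurentPolynomial ℤ :=
  T (-2 * (ρ v : ℤ)) * ((-1) ^ (ρ v - ρ u) * evq (R u v))

private lemma iotaAct_apply (ρ : P → ℕ) (R : P → P → Polynomial ℤ)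
    (f : P → LaurentPolynomial ℤ) (u : P) :
    iotaAct ρ R f u = ∑ᶠ v, invert (f v) * KK ρ R u v := rfl

open Classical in
private def dlt (w : P) : P → LaurentPolynomial ℤ := fun u => if u = w then 1 else 0

private lemma dlt_self (w : P) : dlt w w = 1 := by simp [dlt]

private lemma dlt_ne {u w : P} (h : u ≠ w) : dlt w u = 0 := by simp [dlt, h]

private lemma dlt_support (w : P) : (Function.support (dlt w)).Finite :=
  (Set.finite_singleton w).subset fun u hu => by
    by_contra h
    exact hu (dlt_ne h)

private lemma term_support (f g : P → LaurentPolynomial ℤ) (hf : (Function.support f).Finite) :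
    (Function.support fun v => invert (f v) * g v).Finite :=
  hf.subset fun v hv => by
    simp only [Function.mem_support] at hv ⊢
    intro h0
    apply hv
    simp [h0]

private lemma KK_eq_zero {ρ : P → ℕ} {R : P → P → Polynomial ℤ}
    (hR0 : ∀ u w : P, ¬ u ≤ w → R u w = 0) {u v : P} (h : ¬ u ≤ v) : KK ρ R u v = 0 := by
  simp [KK, hR0 u v h, evq_zero]

private lemma KK_sgn (hP : IsPircon P) {ρ : P → ℕ}
    (hρcov : ∀ a b : P, a ⋖ b → ρ b = ρ a + 1) {R : P → P → Polynomial ℤ}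
    (hR0 : ∀ u w : P, ¬ u ≤ w → R u w = 0) (u v : P) :
    KK ρ R u v = T (-2 * (ρ v : ℤ)) * ((-1) ^ (ρ v) * ((-1) ^ (ρ u) * evq (R u v))) := by
  unfold KK
  congr 1
  refine sgn_split _ _ _ ?_
  by_cases h : u ≤ v
  · exact Or.inr (rho_le hP hρcov h)
  · exact Or.inl (by simp [hR0 u v h, evq_zero])

private lemma iota_support (hP : IsPircon P) {ρ : P → ℕ} {R : P → P → Polynomial ℤ}
    (hR0 : ∀ u w : P, ¬ u ≤ w → R u w = 0) (f : P → LaurentPolynomial ℤ)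
    (hf : (Function.support f).Finite) : (Function.support (iotaAct ρ R f)).Finite := by
  have hsub : Function.support (iotaAct ρ R f) ⊆ ⋃ v ∈ Function.support f, Set.Iic v := by
    intro u hu
    simp only [Function.mem_support] at hu
    by_contra hmem
    apply hu
    rw [iotaAct_apply]
    apply finsum_eq_zero_of_forall_eq_zero
    intro v
    by_cases hv : f v = 0
    · simp [hv]
    · have hnle : ¬ u ≤ v := fun hle => hmem (Set.mem_biUnion hv hle)
      rw [KK_eq_zero hR0 hnle, mul_zero]
  exact Set.Finite.subset (Set.Finite.biUnion hf fun v _ => iic_finite hP v) hsub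

private lemma iota_add {ρ : P → ℕ} {R : P → P → Polynomial ℤ}
    (f g : P → LaurentPolynomial ℤ) (hf : (Function.support f).Finite)
    (hg : (Function.support g).Finite) :
    iotaAct ρ R (f + g) = iotaAct ρ R f + iotaAct ρ R g := by
  funext u
  rw [Pi.add_apply, iotaAct_apply, iotaAct_apply, iotaAct_apply,
    ← finsum_add_distrib (term_support f _ hf) (term_support g _ hg)]
  exact finsum_congr fun v => by rw [Pi.add_apply, map_add, add_mul]

private lemma iota_smul {ρ : P → ℕ} {R : P → P → Polynomial ℤ} (c : LaurentPolynomial ℤ)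
    (f : P → LaurentPolynomial ℤ) (hf : (Function.support f).Finite) :
    iotaAct ρ R (fun v => c * f v) = fun u => invert c * iotaAct ρ R f u := by
  funext u
  rw [iotaAct_apply, iotaAct_apply, mul_finsum' _ _ (term_support f _ hf)]
  exact finsum_congr fun v => by rw [map_mul, mul_assoc]

private lemma TM_support {M : P → P} (hinv : Function.Involutive M) (y : LaurentPolynomial ℤ)
    (f : P → LaurentPolynomial ℤ) (hf : (Function.support f).Finite) :
    (Function.support (TMact M y f)).Finite := by
  apply (hf.union (hf.image M)).subset
  intro u hu
  simp only [Function.mem_support, TMact] at hu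
  by_contra hmem
  simp only [Set.mem_union, Function.mem_support, not_or, not_not, Set.mem_image] at hmem
  obtain ⟨hfu, hfim⟩ := hmem
  have hfMu : f (M u) = 0 := by
    by_contra h
    exact hfim ⟨M u, h, hinv u⟩
  apply hu
  split_ifs <;> simp [hfu, hfMu]

private lemma TM_dlt {M : P → P} (hinv : Function.Involutive M) (y : LaurentPolynomial ℤ)
    {w : P} (hw : M w ⋖ w) : TMact M y (dlt (M w)) = dlt w := by
  have hMne : ∀ z : P, M z = M w → z = w := fun z h => hinv.injective h
  funext u
  by_cases huw : u = w
  · subst huw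
    rw [TMact]
    simp only [if_neg hw.ne, if_pos hw.lt]
    rw [dlt_self, dlt_ne hw.ne', dlt_self]
    ring
  · rw [TMact, dlt_ne huw]
    split_ifs with h1 h2
    · rw [dlt_ne, mul_zero]
      intro heq
      apply hw.ne'
      calc w = M (M w) := (hinv w).symm
        _ = M u := by rw [heq]
        _ = u := h1
        _ = M w := heq
    · rw [dlt_ne, dlt_ne, mul_zero, add_zero]
      · intro heq
        rw [heq, hinv w] at h2
        exact absurd h2 (asymm hw.lt)
      · exact fun h => huw (hMne u h)
    · rw [dlt_ne, mul_zero]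
      exact fun h => huw (hMne u h)
private lemma evq_rel_ud2 {p r s : Polynomial ℤ} (h : p = (X - 1) * r + X * s) :
    evq p = (T 2 - 1) * evq r + T 2 * evq s := by
  simp only [evq, h, map_add, map_mul, map_sub, map_one, aeval_X]

private lemma evq_rel_x {x p r : Polynomial ℤ} (h : p = (X - 1 - x) * r) :
    evq p = (T 2 - 1 - evq x) * evq r := by
  simp only [evq, h, map_mul, map_sub, map_one, aeval_X]

private lemma Ybar {x : Polynomial ℤ} (hx : x = X ∨ x = -1) :
    invert (evq x) = T (-2) * evq x + (T (-2) - 1) := by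
  rcases hx with rfl | rfl
  · simp only [evq, aeval_X, invert_T]
    linear_combination -hTT
  · simp only [evq, map_neg, map_one, invert_T]
    ring

private lemma YbarY {x : Polynomial ℤ} (hx : x = X ∨ x = -1) :
    evq x * invert (evq x) = 1 := by
  rcases hx with rfl | rfl
  · simp only [evq, aeval_X, invert_T]
    exact hTT
  · simp only [evq, map_neg, map_one]
    ring

private lemma T_shift (n : ℤ) :
    (T (-2 * (n + 1)) : LaurentPolynomial ℤ) = T (-2 * n) * T (-2) := by
  rw [show -2 * (n + 1) = -2 * n + (-2) by ring, T_add]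

private lemma support_mul_const {g : P → LaurentPolynomial ℤ} (a : LaurentPolynomial ℤ)
    (hg : (Function.support g).Finite) : (Function.support fun v => a * g v).Finite :=
  hg.subset fun v hv => by
    simp only [Function.mem_support] at hv ⊢
    intro h0
    apply hv
    rw [h0, mul_zero]

private lemma term_support2 {M : P → P} (hinv : Function.Involutive M)
    (f g : P → LaurentPolynomial ℤ) (hf : (Function.support f).Finite) :
    (Function.support fun v => invert (f (M v)) * g v).Finite :=
  (hf.image M).subset fun v hv => by
    simp only [Function.mem_support] at hv
    have hne : f (M v) ≠ 0 := fun h0 => hv (by simp [h0])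
    exact ⟨M v, hne, hinv v⟩

private lemma finsum_comb (g1 g2 : P → LaurentPolynomial ℤ)
    (h1 : (Function.support g1).Finite) (h2 : (Function.support g2).Finite)
    (a b : LaurentPolynomial ℤ) :
    a * (∑ᶠ v, g1 v) + b * (∑ᶠ v, g2 v) = ∑ᶠ v, (a * g1 v + b * g2 v) := by
  rw [mul_finsum' _ _ h1, mul_finsum' _ _ h2,
    ← finsum_add_distrib (support_mul_const a h1) (support_mul_const b h2)]

open Classical in
private def cOne (M : P → P) (Y : LaurentPolynomial ℤ) : P → LaurentPolynomial ℤ := fun v =>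
  if M v = v then invert Y else if M v < v then T (-2) - 1 else 0

open Classical in
private def cTwo (M : P → P) : P → LaurentPolynomial ℤ := fun v =>
  if M v = v then 0 else if M v < v then 1 else T (-2)
set_option maxHeartbeats 1000000 in
private lemma iota_TM (hP : IsPircon P) {ρ : P → ℕ}
    (hρcov : ∀ a b : P, a ⋖ b → ρ b = ρ a + 1)
    {S : Set (P → P)} {x : Polynomial ℤ} (hx : x = X ∨ x = -1)
    {R : P → P → Polynomial ℤ} (hR : IsKLRFamily S x R) (hud : UpDownSymmetry S x R)
    {M : P → P} (hM : M ∈ S) (hinv : Function.Involutive M)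
    (htri : ∀ t : P, M t ⋖ t ∨ M t = t ∨ t ⋖ M t)
    (f : P → LaurentPolynomial ℤ) (hf : (Function.support f).Finite) :
    iotaAct ρ R (TMact M (evq x) f) = fun u =>
      T (-2) * TMact M (evq x) (iotaAct ρ R f) u + (T (-2) - 1) * iotaAct ρ R f u := by
  obtain ⟨hR0, hR1, hRrec⟩ := hR
  have hsgn : ∀ a b : P, KK ρ R a b
      = T (-2 * (ρ b : ℤ)) * ((-1) ^ (ρ b) * ((-1) ^ (ρ a) * evq (R a b))) :=
    fun a b => KK_sgn hP hρcov hR0 a b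
  have hi21 : invert (T 2 - 1 : LaurentPolynomial ℤ) = T (-2) - 1 := by
    rw [map_sub, invert_T, map_one]
  funext u
  have hstep : ∀ v, invert (TMact M (evq x) f v) * KK ρ R u v
      = invert (f v) * (cOne M (evq x) v * KK ρ R u v)
        + invert (f (M v)) * (cTwo M v * KK ρ R u v) := by
    intro v
    simp only [TMact, cOne, cTwo]
    rcases htri v with hv | hv | hv
    · simp only [if_neg hv.ne, if_pos hv.lt]
      rw [map_add, map_mul, hi21]
      ring
    · simp only [if_pos hv]
      rw [map_mul]
      ring
    · simp only [if_neg hv.lt.ne', if_neg (lt_asymm hv.lt)]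
      rw [map_mul, invert_T]
      ring
  have hL : iotaAct ρ R (TMact M (evq x) f) u
      = ∑ᶠ v, invert (f v)
          * (cOne M (evq x) v * KK ρ R u v + cTwo M (M v) * KK ρ R u (M v)) := by
    rw [iotaAct_apply, finsum_congr hstep,
      finsum_add_distrib (term_support f _ hf) (term_support2 hinv f _ hf)]
    have h2 : ∑ᶠ v, invert (f (M v)) * (cTwo M v * KK ρ R u v)
        = ∑ᶠ v, invert (f v) * (cTwo M (M v) * KK ρ R u (M v)) := by
      rw [← finsum_comp (g := fun w => invert (f w) * (cTwo M (M w) * KK ρ R u (M w))) M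
        hinv.bijective]
      exact finsum_congr fun v => by rw [hinv v]
    rw [h2, ← finsum_add_distrib (term_support f _ hf) (term_support f _ hf)]
    exact finsum_congr fun v => (mul_add _ _ _).symm
  rw [hL]
  simp only [TMact]
  rcases htri u with hu | hu | hu
  · -- M u ⋖ u
    have hρu : ρ u = ρ (M u) + 1 := hρcov (M u) u hu
    have hcovu : M u ⋖ M (M u) := by rw [hinv u]; exact hu
    simp only [if_neg hu.ne, if_pos hu.lt]
    rw [iotaAct_apply ρ R f (M u), iotaAct_apply ρ R f u]
    rw [show ∀ A B : LaurentPolynomial ℤ,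
        T (-2) * (A + (T 2 - 1) * B) + (T (-2) - 1) * B
          = T (-2) * A + (T (-2) * (T 2 - 1) + (T (-2) - 1)) * B from fun A B => by ring]
    rw [finsum_comb _ _ (term_support f _ hf) (term_support f _ hf)]
    refine finsum_congr fun v => ?_
    have hscal : cOne M (evq x) v * KK ρ R u v + cTwo M (M v) * KK ρ R u (M v)
        = T (-2) * KK ρ R (M u) v + (T (-2) * (T 2 - 1) + (T (-2) - 1)) * KK ρ R u v := by
      rcases htri v with hv | hv | hv
      · -- M v ⋖ v  (leaf 9)
        have hρv : ρ v = ρ (M v) + 1 := hρcov (M v) v hv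
        simp only [cOne, cTwo]
        rw [hinv v]
        rw [if_neg hv.ne, if_pos hv.lt, if_neg hv.lt.ne', if_neg (lt_asymm hv.lt)]
        have h2 := (hud M hM (M u) v hcovu).2.1 hv
        rw [hinv u] at h2
        have e2 := evq_rel_ud2 h2
        rw [hsgn u v, hsgn u (M v), hsgn (M u) v, e2, hρv, hρu]
        push_cast
        rw [T_shift]
        linear_combination (T (-2) * (T (-2 * (ρ (M v) : ℤ))
          * ((-1 : LaurentPolynomial ℤ) ^ (ρ (M v)) * ((-1) ^ (ρ (M u))
            * evq (R u (M v)))))) * hTT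
      · -- M v = v  (leaf 7)
        simp only [cOne, cTwo]
        rw [hinv v, hv]
        simp only [eq_self_iff_true, lt_self_iff_false, if_true, if_false]
        have h := (hud M hM (M u) v hcovu).2.2 hv
        rw [hinv u] at h
        have e := evq_rel_x h
        rw [hsgn u v, hsgn (M u) v, e, hρu]
        linear_combination (-(T (-2 * (ρ v : ℤ)) * ((-1 : LaurentPolynomial ℤ) ^ (ρ v)
          * ((-1) ^ (ρ (M u)) * evq (R u v))))) * (Ybar hx)
      · -- v ⋖ M v  (leaf 8)
        have hρv : ρ (M v) = ρ v + 1 := hρcov v (M v) hv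
        have hcovv : M (M v) ⋖ M v := by rw [hinv v]; exact hv
        simp only [cOne, cTwo]
        rw [hinv v]
        rw [if_neg hv.lt.ne', if_neg (lt_asymm hv.lt), if_neg hv.lt.ne, if_pos hv.lt]
        have h := (hRrec M hM u (M v) hcovv).1 hu
        rw [hinv v] at h
        have e : evq (R u (M v)) = evq (R (M u) v) := by rw [h]
        rw [hsgn u (M v), hsgn (M u) v, e, hρv, hρu]
        push_cast
        rw [T_shift]
        linear_combination (-(KK ρ R u v)) * hTT
    linear_combination invert (f v) * hscal
  · -- M u = u
    simp only [if_pos hu]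
    rw [iotaAct_apply ρ R f u]
    rw [show ∀ A : LaurentPolynomial ℤ,
        T (-2) * (evq x * A) + (T (-2) - 1) * A
          = (T (-2) * evq x + (T (-2) - 1)) * A from fun A => by ring]
    rw [mul_finsum' _ _ (term_support f _ hf)]
    refine finsum_congr fun v => ?_
    have hscal : cOne M (evq x) v * KK ρ R u v + cTwo M (M v) * KK ρ R u (M v)
        = (T (-2) * evq x + (T (-2) - 1)) * KK ρ R u v := by
      rcases htri v with hv | hv | hv
      · -- leaf 3
        have hρv : ρ v = ρ (M v) + 1 := hρcov (M v) v hv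
        simp only [cOne, cTwo]
        rw [hinv v]
        rw [if_neg hv.ne, if_pos hv.lt, if_neg hv.lt.ne', if_neg (lt_asymm hv.lt)]
        have h := (hRrec M hM u v hv).2.2 hu
        have e := evq_rel_x h
        rw [hsgn u v, hsgn u (M v), e, hρv]
        push_cast
        rw [T_shift]
        rcases hx with rfl | rfl <;>
          simp only [evq, aeval_X, map_neg, map_one, invert_T] <;>
          linear_combination (-(T (-2) * (T (-2 * (ρ (M v) : ℤ))
            * ((-1 : LaurentPolynomial ℤ) ^ (ρ (M v)) * ((-1) ^ (ρ u)
              * (Polynomial.aeval (T 2 : LaurentPolynomial ℤ)) (R u (M v))))))) * hTT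
      · -- leaf 1
        simp only [cOne, cTwo]
        rw [hinv v, hv]
        simp only [eq_self_iff_true, lt_self_iff_false, if_true, if_false]
        linear_combination (KK ρ R u v) * (Ybar hx)
      · -- leaf 2
        have hρv : ρ (M v) = ρ v + 1 := hρcov v (M v) hv
        have hcovv : M (M v) ⋖ M v := by rw [hinv v]; exact hv
        simp only [cOne, cTwo]
        rw [hinv v]
        rw [if_neg hv.lt.ne', if_neg (lt_asymm hv.lt), if_neg hv.lt.ne, if_pos hv.lt]
        have h := (hRrec M hM u (M v) hcovv).2.2 hu
        rw [hinv v] at h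
        have e := evq_rel_x h
        rw [hsgn u v, hsgn u (M v), e, hρv]
        push_cast
        rw [T_shift]
        linear_combination (-(T (-2 * (ρ v : ℤ)) * ((-1 : LaurentPolynomial ℤ) ^ (ρ v)
          * ((-1) ^ (ρ u) * evq (R u v))))) * hTT
    linear_combination invert (f v) * hscal
  · -- u ⋖ M u
    have hρu : ρ (M u) = ρ u + 1 := hρcov u (M u) hu
    simp only [if_neg hu.lt.ne', if_neg (lt_asymm hu.lt)]
    rw [iotaAct_apply ρ R f (M u), iotaAct_apply ρ R f u]
    rw [show ∀ A B : LaurentPolynomial ℤ,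
        T (-2) * (T 2 * A) + (T (-2) - 1) * B
          = (T (-2) * T 2) * A + (T (-2) - 1) * B from fun A B => by ring]
    rw [finsum_comb _ _ (term_support f _ hf) (term_support f _ hf)]
    refine finsum_congr fun v => ?_
    have hscal : cOne M (evq x) v * KK ρ R u v + cTwo M (M v) * KK ρ R u (M v)
        = (T (-2) * T 2) * KK ρ R (M u) v + (T (-2) - 1) * KK ρ R u v := by
      rcases htri v with hv | hv | hv
      · -- leaf 6
        have hρv : ρ v = ρ (M v) + 1 := hρcov (M v) v hv
        have hcovv : M v ⋖ M (M v) := by rw [hinv v]; exact hv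
        simp only [cOne, cTwo]
        rw [hinv v]
        rw [if_neg hv.ne, if_pos hv.lt, if_neg hv.lt.ne', if_neg (lt_asymm hv.lt)]
        have h := (hud M hM u (M v) hu).1 hcovv
        rw [hinv v] at h
        have e : evq (R u (M v)) = evq (R (M u) v) := by rw [h]
        rw [hsgn u (M v), hsgn (M u) v, e, hρv, hρu]
        push_cast
        rw [T_shift]
        linear_combination (-(T (-2) * (T (-2 * (ρ (M v) : ℤ))
          * ((-1 : LaurentPolynomial ℤ) ^ (ρ (M v)) * ((-1) ^ (ρ u)
            * evq (R (M u) v)))))) * hTT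
      · -- leaf 4
        simp only [cOne, cTwo]
        rw [hinv v, hv]
        simp only [eq_self_iff_true, lt_self_iff_false, if_true, if_false]
        have h := (hud M hM u v hu).2.2 hv
        have e := evq_rel_x h
        rw [hsgn u v, hsgn (M u) v, e, hρu]
        rcases hx with rfl | rfl
        · simp only [evq, aeval_X, map_neg, map_one, invert_T]
          linear_combination (T (-2 * (ρ v : ℤ)) * ((-1 : LaurentPolynomial ℤ) ^ (ρ v)
            * ((-1) ^ (ρ u)
              * (Polynomial.aeval (T 2 : LaurentPolynomial ℤ)) (R (M u) v)))) * hTT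
        · simp only [evq, aeval_X, map_neg, map_one, invert_T]
          ring
      · -- leaf 5
        have hρv : ρ (M v) = ρ v + 1 := hρcov v (M v) hv
        have hcovv : M (M v) ⋖ M v := by rw [hinv v]; exact hv
        simp only [cOne, cTwo]
        rw [hinv v]
        rw [if_neg hv.lt.ne', if_neg (lt_asymm hv.lt), if_neg hv.lt.ne, if_pos hv.lt]
        have h1 := (hud M hM u v hu).1 hv
        have e1 : evq (R u v) = evq (R (M u) (M v)) := by rw [h1]
        have h2 := (hud M hM u (M v) hu).2.1 hcovv
        rw [hinv v] at h2
        have e2 := evq_rel_ud2 h2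
        rw [hsgn u v, hsgn u (M v), hsgn (M u) v, e1, e2, hρv, hρu]
        push_cast
        rw [T_shift]
        linear_combination (-(T (-2 * (ρ v : ℤ)) * ((-1 : LaurentPolynomial ℤ) ^ (ρ v)
          * ((-1) ^ (ρ u) * evq (R (M u) (M v)))))) * hTT
    linear_combination invert (f v) * hscal
private lemma iota_dlt_bot {ρ : P → ℕ} (hρ0 : ρ (⊥ : P) = 0) {R : P → P → Polynomial ℤ}
    (hR0 : ∀ u w : P, ¬ u ≤ w → R u w = 0) (hR1 : ∀ w : P, R w w = 1) :
    iotaAct ρ R (dlt (⊥ : P)) = dlt (⊥ : P) := by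
  funext u
  rw [iotaAct_apply,
    finsum_eq_single _ (⊥ : P) (fun v hv => by rw [dlt_ne hv, map_zero, zero_mul]),
    dlt_self, map_one, one_mul]
  by_cases hu : u = ⊥
  · subst hu
    simp [KK, hρ0, hR1, evq_one, dlt_self]
  · rw [KK_eq_zero hR0 (fun h => hu (le_bot_iff.mp h)), dlt_ne hu]

private lemma iota_iota_dlt {ρ : P → ℕ} (hρ0 : ρ (⊥ : P) = 0)
    (hρcov : ∀ a b : P, a ⋖ b → ρ b = ρ a + 1) (hP : IsPircon P)
    {S : Set (P → P)} (hS : IsPirconSystem S)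
    {x : Polynomial ℤ} (hx : x = X ∨ x = -1)
    {R : P → P → Polynomial ℤ} (hR : IsKLRFamily S x R) (hud : UpDownSymmetry S x R)
    (w : P) : iotaAct ρ R (iotaAct ρ R (dlt w)) = dlt w := by
  suffices H : ∀ n : ℕ, ∀ w : P, ρ w = n → iotaAct ρ R (iotaAct ρ R (dlt w)) = dlt w from
    H (ρ w) w rfl
  intro n
  induction n using Nat.strong_induction_on with
  | _ n ih =>
    intro w hn
    by_cases hw : w = ⊥
    · subst hw
      rw [iota_dlt_bot hρ0 hR.1 hR.2.1, iota_dlt_bot hρ0 hR.1 hR.2.1]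
    · obtain ⟨M, hM, hMw⟩ := hS.2 w hw
      obtain ⟨hinv, htri, _⟩ := hS.1 M hM
      have hdlt : TMact M (evq x) (dlt (M w)) = dlt w := TM_dlt hinv _ hMw
      have hfin1 : (Function.support (dlt (M w))).Finite := dlt_support _
      have hι1 : (Function.support (iotaAct ρ R (dlt (M w)))).Finite :=
        iota_support hP hR.1 _ hfin1
      have hIH : iotaAct ρ R (iotaAct ρ R (dlt (M w))) = dlt (M w) := by
        refine ih (ρ (M w)) ?_ (M w) rfl
        have := hρcov (M w) w hMw
        omega
      have hTM1 := iota_TM hP hρcov hx hR hud hM hinv htri (dlt (M w)) hfin1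
      have h1 : iotaAct ρ R (dlt w) = fun u =>
          T (-2) * TMact M (evq x) (iotaAct ρ R (dlt (M w))) u
            + (T (-2) - 1) * iotaAct ρ R (dlt (M w)) u := by
        rw [← hdlt]; exact hTM1
      have hgfin : (Function.support (TMact M (evq x) (iotaAct ρ R (dlt (M w))))).Finite :=
        TM_support hinv _ _ hι1
      have hsplit : (fun u => T (-2) * TMact M (evq x) (iotaAct ρ R (dlt (M w))) u
            + (T (-2) - 1) * iotaAct ρ R (dlt (M w)) u)
          = (fun u => T (-2) * TMact M (evq x) (iotaAct ρ R (dlt (M w))) u)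
            + (fun u => (T (-2) - 1) * iotaAct ρ R (dlt (M w)) u) := rfl
      rw [h1, hsplit, iota_add _ _ (support_mul_const _ hgfin) (support_mul_const _ hι1),
        iota_smul _ _ hgfin, iota_smul _ _ hι1]
      have hiotag := iota_TM hP hρcov hx hR hud hM hinv htri (iotaAct ρ R (dlt (M w))) hι1
      rw [hiotag, hIH, hdlt]
      funext u
      simp only [Pi.add_apply, invert_T, map_sub, map_one, neg_neg]
      linear_combination (dlt w u + dlt (M w) u) * hTT

end KLAux
/-- If the family of Kazhdan--Lusztig `R^x`-polynomials of a pircon system `(P,S)`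
satisfies the up-down symmetry, then `ι^x` is an involution of `𝓜_P`. -/
theorem iota_involutive {P : Type*} [PartialOrder P] [OrderBot P]
    (ρ : P → ℕ) (hρ0 : ρ (⊥ : P) = 0) (hρcov : ∀ a b : P, a ⋖ b → ρ b = ρ a + 1)
    (hP : IsPircon P) {S : Set (P → P)} (hS : IsPirconSystem S)
    {x : Polynomial ℤ} (hx : x = X ∨ x = -1)
    {R : P → P → Polynomial ℤ} (hR : IsKLRFamily S x R)
    (hud : UpDownSymmetry S x R)
    (m : P → LaurentPolynomial ℤ) (hm : (Function.support m).Finite) :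
    iotaAct ρ R (iotaAct ρ R m) = m := by
  classical
  have key : ∀ s : Finset P, ∀ m : P → LaurentPolynomial ℤ, Function.support m ⊆ ↑s →
      iotaAct ρ R (iotaAct ρ R m) = m := by
    intro s
    induction s using Finset.induction_on with
    | empty =>
      intro m hsup
      have hm0 : m = 0 := by
        funext u
        by_contra h
        simpa using hsup h
      subst hm0
      have hz : iotaAct ρ R (0 : P → LaurentPolynomial ℤ) = 0 := by
        funext u
        rw [iotaAct_apply]
        apply finsum_eq_zero_of_forall_eq_zero
        intro v
        simp
      rw [hz, hz]
    | @insert w s hws ih =>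
      intro m hsup
      set m' : P → LaurentPolynomial ℤ := fun u => m u - m w * dlt w u with hm'
      have hsupp' : Function.support m' ⊆ ↑s := by
        intro u hu
        simp only [Function.mem_support, hm'] at hu
        by_cases huw : u = w
        · subst huw
          rw [dlt_self, mul_one, sub_self] at hu
          exact absurd rfl hu
        · rw [dlt_ne huw, mul_zero, sub_zero] at hu
          have hmem := hsup hu
          simp only [Finset.coe_insert, Set.mem_insert_iff] at hmem
          rcases hmem with h | h
          · exact absurd h huw
          · exact h
      have hm'fin : (Function.support m').Finite := s.finite_toSet.subset hsupp'
      have hdfin : (Function.support fun u => m w * dlt w u).Finite :=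
        support_mul_const _ (dlt_support w)
      have hsplit : m = (fun u => m w * dlt w u) + m' := by
        funext u
        simp [hm']
      rw [hsplit, iota_add _ _ hdfin hm'fin, iota_smul _ _ (dlt_support w)]
      have hι_d : (Function.support (iotaAct ρ R (dlt w))).Finite :=
        iota_support hP hR.1 _ (dlt_support w)
      have hι_smul : (Function.support fun u => invert (m w) * iotaAct ρ R (dlt w) u).Finite :=
        support_mul_const _ hι_d
      have hι_m' : (Function.support (iotaAct ρ R m')).Finite :=
        iota_support hP hR.1 _ hm'fin
      rw [iota_add _ _ hι_smul hι_m', iota_smul _ _ hι_d, ih m' hsupp',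
        iota_iota_dlt hρ0 hρcov hP hS hx hR hud w]
      funext u
      simp only [Pi.add_apply]
      rw [involutive_invert (m w)]
  refine key hm.toFinset m ?_
  rw [Set.Finite.coe_toFinset]

end
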